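/- Let (R, I) be a graded pair and M a finitely generated graded R-module. Then each g_n(M_R,I) is a compactly supported continuous function, and there exists a constant m̃ > 0, independent of n, such that supp g_n(M_R,I) ⊆ [0, m̃] and supp f_n(M_R,I) ⊆ [0, m̃] for all n ≥ 1. More precisely, if I is generated by s homogeneous elements, M is generated by homogeneous elements of degrees at most n_ν, R is generated as a k-algebra by homogeneous elements of degrees at most m_μ, and l is an integer with J^l ⊆ I for the irrelevant ideal J = ⊕_{m>0} R_m, then (M/I^{[q]}M)_m = 0 for all m ≥ n_ν + m_μ·l·s·q. -/

import Mathlib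

open Filter MeasureTheory Topology

noncomputable section

/-- The `q`-th Frobenius bracket power `I^{[q]}` of an ideal `I`. -/
def Ideal.frobeniusPow {R : Type*} [CommSemiring R] (I : Ideal R) (q : ℕ) : Ideal R :=
  Ideal.span ((· ^ q) '' (I : Set R))

/-- `dim_k` of the degree-`j` graded piece of `M ⧸ N`, for a graded `k`-module `M`
with grading `ℳ` and a `k`-submodule `N ≤ M`. -/
def gradedPieceLen (k : Type*) [Field k] {M : Type*} [AddCommGroup M] [Module k M]
    (ℳ : ℕ → Submodule k M) (N : Submodule k M) (j : ℕ) : ℕ :=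
  Module.finrank k (↥(ℳ j) ⧸ (N.comap (ℳ j).subtype))

/-- The step function `f_n(M_R, I)` of a graded pair, for a graded module `M`. -/
def hkStep (k : Type*) [Field k] {R M : Type*} [CommRing R] [AddCommGroup M] [Module R M]
    [Module k M] [SMul k R] [IsScalarTower k R M]
    (ℳ : ℕ → Submodule k M) (I : Ideal R) (d n₀ p n : ℕ) (x : ℝ) : ℝ :=
  (∑ i ∈ Finset.range n₀,
      (gradedPieceLen k ℳ ((I.frobeniusPow (p ^ n) • (⊤ : Submodule R M)).restrictScalars k)
        (⌊x * (p ^ n : ℕ)⌋₊ * n₀ + i) : ℝ)) / ((p : ℝ) ^ n) ^ (d - 1)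

/-- The interpolated function `g_n(M_R, I)` of a graded pair. -/
def hkStepG (k : Type*) [Field k] {R M : Type*} [CommRing R] [AddCommGroup M] [Module R M]
    [Module k M] [SMul k R] [IsScalarTower k R M]
    (ℳ : ℕ → Submodule k M) (I : Ideal R) (d n₀ p n : ℕ) (x : ℝ) : ℝ :=
  (1 - (x * (p ^ n : ℕ) - ⌊x * (p ^ n : ℕ)⌋₊)) *
      hkStep k ℳ I d n₀ p n ((⌊x * (p ^ n : ℕ)⌋₊ : ℝ) / (p ^ n : ℕ))
    + (x * (p ^ n : ℕ) - ⌊x * (p ^ n : ℕ)⌋₊) *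
      hkStep k ℳ I d n₀ p n ((⌊x * (p ^ n : ℕ)⌋₊ + 1 : ℝ) / (p ^ n : ℕ))

private lemma interp_continuous (G : ℕ → ℝ) :
    Continuous fun y : ℝ => (1 - (y - ⌊y⌋₊)) * G ⌊y⌋₊ + (y - ⌊y⌋₊) * G (⌊y⌋₊ + 1) := by
  set f : ℝ → ℝ := fun y => (1 - (y - ⌊y⌋₊)) * G ⌊y⌋₊ + (y - ⌊y⌋₊) * G (⌊y⌋₊ + 1) with hf
  have hA : ∀ m : ℕ, Continuous fun y : ℝ =>
      (1 - (y - (m : ℝ))) * G m + (y - (m : ℝ)) * G (m + 1) := by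
    intro m; fun_prop
  have hfeq : ∀ (y : ℝ) (m : ℕ), ⌊y⌋₊ = m →
      f y = (1 - (y - (m : ℝ))) * G m + (y - (m : ℝ)) * G (m + 1) := by
    intro y m h; simp only [hf, h]
  rw [continuous_iff_continuousAt]
  intro y₀
  by_cases h1 : ((⌊y₀⌋₊ : ℝ) < y₀ ∨ y₀ < 1)
  · have hev : ∀ᶠ y in 𝓝 y₀, ⌊y⌋₊ = ⌊y₀⌋₊ := by
      rcases h1 with h | h
      · have h2 : y₀ < (⌊y₀⌋₊ : ℝ) + 1 := Nat.lt_floor_add_one y₀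
        filter_upwards [Ioo_mem_nhds h h2] with y hy
        have h0 : (0:ℝ) ≤ y := le_trans (by positivity) hy.1.le
        rw [Nat.floor_eq_iff h0]
        exact ⟨hy.1.le, by push_cast; exact hy.2⟩
      · have h0 : ⌊y₀⌋₊ = 0 := Nat.floor_eq_zero.mpr h
        rw [h0]
        filter_upwards [Iio_mem_nhds h] with y hy
        exact Nat.floor_eq_zero.mpr hy
    exact ((hA ⌊y₀⌋₊).continuousAt).congr
      (by filter_upwards [hev] with y hy; exact (hfeq y _ hy).symm)
  · push_neg at h1
    obtain ⟨hle, h1y⟩ := h1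
    have hy0 : (0:ℝ) ≤ y₀ := le_trans zero_le_one h1y
    have hfl : (⌊y₀⌋₊ : ℝ) = y₀ := le_antisymm (Nat.floor_le hy0) hle
    set m := ⌊y₀⌋₊ with hm
    have hm1 : 1 ≤ m := by
      have : (1:ℝ) ≤ (m:ℝ) := hfl ▸ h1y
      exact_mod_cast this
    rw [← continuousWithinAt_univ, ← Set.Iio_union_Ici (a := y₀)]
    apply ContinuousWithinAt.union
    · apply ContinuousWithinAt.congr_of_eventuallyEq ((hA (m-1)).continuousWithinAt)
      · have hIoo : Set.Ioo (y₀ - 1) (y₀ + 1) ∈ 𝓝 y₀ := Ioo_mem_nhds (by linarith) (by linarith)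
        filter_upwards [mem_nhdsWithin_of_mem_nhds hIoo, self_mem_nhdsWithin] with y hy hy'
        have hy'' : y < y₀ := hy'
        have hfly : ⌊y⌋₊ = m - 1 := by
          have h0 : (0:ℝ) ≤ y := by
            have : (1:ℝ) ≤ (m:ℝ) := by exact_mod_cast hm1
            have := hy.1; linarith
          rw [Nat.floor_eq_iff h0]
          have hc : ((m - 1 : ℕ) : ℝ) = (m:ℝ) - 1 := by
            push_cast [hm1]; ring
          rw [hc]
          constructor
          · have := hy.1; linarith
          · have : (m:ℝ) - 1 + 1 = (m:ℝ) := by ring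
            rw [this, hfl]; exact hy''
        rw [hfeq y _ hfly]
      · rw [hfeq y₀ m rfl]
        have hc : ((m - 1 : ℕ) : ℝ) = (m:ℝ) - 1 := by push_cast [hm1]; ring
        rw [hc, Nat.sub_add_cancel hm1, ← hfl]
        ring
    · apply ContinuousWithinAt.congr_of_eventuallyEq ((hA m).continuousWithinAt)
      · have hIio : Set.Iio (y₀ + 1) ∈ 𝓝 y₀ := Iio_mem_nhds (by linarith)
        filter_upwards [mem_nhdsWithin_of_mem_nhds hIio, self_mem_nhdsWithin] with y hy hy'
        have hy'' : y₀ ≤ y := hy'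
        have hfly : ⌊y⌋₊ = m := by
          rw [Nat.floor_eq_iff (le_trans hy0 hy'')]
          exact ⟨hfl ▸ hy'', by push_cast; rw [hfl]; exact hy⟩
        exact hfeq y _ hfly
      · exact hfeq y₀ m rfl

private lemma pow_span_le_frob {R : Type*} [CommRing R] (q : ℕ) :
    ∀ (s : ℕ) (g : Fin (s + 1) → R),
      (Ideal.span (Set.range g)) ^ ((s + 1) * q) ≤ Ideal.span ((· ^ q) '' Set.range g) := by
  intro s
  induction s with
  | zero =>
    intro g
    have hr : Set.range g = {g 0} := by
      rw [Fin.range_fin_succ]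
      have : Set.range (Fin.tail g) = ∅ := Set.range_eq_empty _
      rw [this]; simp
    rw [hr, show (0+1)*q = q from by ring, Ideal.span_singleton_pow]
    apply Ideal.span_mono
    rintro x rfl
    exact ⟨g 0, by simp [hr], rfl⟩
  | succ s ih =>
    intro g
    rw [Fin.range_fin_succ, Ideal.span_insert]
    have hexp : (s + 1 + 1) * q = q + (s + 1) * q := by ring
    rw [hexp]
    refine le_trans Ideal.sup_pow_add_le_pow_sup_pow (sup_le ?_ ?_)
    · rw [Ideal.span_singleton_pow]
      apply Ideal.span_mono
      rintro x rfl
      exact ⟨g 0, by rw [Fin.range_fin_succ]; exact Set.mem_insert _ _, rfl⟩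
    · refine le_trans (ih (Fin.tail g)) (Ideal.span_mono (Set.image_mono ?_))
      rw [Fin.range_fin_succ]
      exact Set.subset_insert _ _

set_option maxHeartbeats 1000000
set_option synthInstance.maxHeartbeats 400000

/-- (Lemma 2.3 of the paper.)  Each `g_n(M_R, I)` is a compactly
supported continuous function, with a support bound independent of `n`; more precisely
`(M/I^{[q]}M)_m = 0` for all `m ≥ n_ν + m_μ·l·s·q`. -/
theorem statement5
    (k : Type*) [Field k] [PerfectField k] (p : ℕ) [Fact p.Prime] [CharP k p]
    (R : Type*) [CommRing R] [IsDomain R] [IsNoetherianRing R] [Algebra k R]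
    [Algebra.FiniteType k R]
    (𝒜 : ℕ → Submodule k R) [GradedAlgebra 𝒜]
    (h𝒜0 : 𝒜 0 ≤ Submodule.span k {1})
    (d : ℕ) (hd : 2 ≤ d) (hdim : ringKrullDim R = d)
    (I : Ideal R) (hI : I.IsHomogeneous 𝒜) (hIcolen : FiniteDimensional k (R ⧸ I))
    (n₀ : ℕ) (hn₀pos : 0 < n₀)
    (hn₀dvd : ∀ m, 0 < m → 𝒜 m ≠ ⊥ → n₀ ∣ m)
    (hn₀gcd : ∀ c : ℕ, (∀ m, 0 < m → 𝒜 m ≠ ⊥ → c ∣ m) → c ∣ n₀)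
    (M : Type*) [AddCommGroup M] [Module R M] [Module k M] [IsScalarTower k R M]
    [Module.Finite R M]
    (ℳ : ℕ → Submodule k M) [DirectSum.Decomposition ℳ] [SetLike.GradedSMul 𝒜 ℳ]
    -- `I` is generated by `s` homogeneous elements
    (s : ℕ) (gI : Fin s → R) (hgIhom : ∀ i, ∃ e : ℕ, gI i ∈ 𝒜 e)
    (hgI : I = Ideal.span (Set.range gI))
    -- `M` is generated by homogeneous elements of degrees at most `nν`
    (nν t : ℕ) (gM : Fin t → M) (hgMhom : ∀ i, ∃ e ≤ nν, gM i ∈ ℳ e)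
    (hgM : Submodule.span R (Set.range gM) = ⊤)
    -- `R` is generated as a `k`-algebra by homogeneous elements of degrees at most `mμ`
    (mμ u : ℕ) (gR : Fin u → R) (hgRhom : ∀ i, ∃ e ≤ mμ, gR i ∈ 𝒜 e)
    (hgR : Algebra.adjoin k (Set.range gR) = ⊤)
    -- `J^l ⊆ I` for the irrelevant ideal `J`
    (l : ℕ) (hl : (HomogeneousIdeal.irrelevant 𝒜).toIdeal ^ l ≤ I) :
    (∀ n, ContinuousOn (hkStepG k ℳ I d n₀ p n) (Set.Ici 0)) ∧
    (∃ mt : ℝ, 0 < mt ∧ ∀ n : ℕ, 1 ≤ n → ∀ x : ℝ, mt < x →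
      hkStepG k ℳ I d n₀ p n x = 0 ∧ hkStep k ℳ I d n₀ p n x = 0) ∧
    (∀ n m : ℕ, nν + mμ * l * s * p ^ n ≤ m →
      ℳ m ≤ ((I.frobeniusPow (p ^ n)) • (⊤ : Submodule R M)).restrictScalars k) := by
  classical
  -- abbreviations
  set J : Ideal R := (HomogeneousIdeal.irrelevant 𝒜).toIdeal with hJdef
  -- homogeneous elements of positive degree lie in the irrelevant ideal
  have hJA : ∀ (j : ℕ) (x : R), x ∈ 𝒜 j → j ≠ 0 → x ∈ J := by
    intro j x hx hj
    show x ∈ HomogeneousIdeal.irrelevant 𝒜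
    rw [HomogeneousIdeal.mem_irrelevant_iff, GradedRing.proj_apply]
    exact DirectSum.decompose_of_mem_ne 𝒜 hx hj
  -- every element of R is a k-combination of monomials in the generators
  have hRspan : ∀ x : R,
      x ∈ Submodule.span k ((Submonoid.closure (Set.range gR) : Submonoid R) : Set R) := by
    intro x
    have h1 : Subalgebra.toSubmodule (Algebra.adjoin k (Set.range gR)) =
        Submodule.span k ((Submonoid.closure (Set.range gR) : Submonoid R) : Set R) :=
      Algebra.adjoin_eq_span k _
    rw [← h1, hgR, Algebra.top_toSubmodule]
    exact Submodule.mem_top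
  -- each monomial is homogeneous and lies in a suitable power of J
  have hmono : 0 < mμ → ∀ w, w ∈ Submonoid.closure (Set.range gR) →
      ∃ e : ℕ, w ∈ 𝒜 e ∧ w ∈ J ^ ((e + mμ - 1) / mμ) := by
    intro hmμ w hw
    induction hw using Submonoid.closure_induction with
    | mem x hx =>
      obtain ⟨i, rfl⟩ := hx
      obtain ⟨e, he, hmem⟩ := hgRhom i
      refine ⟨e, hmem, ?_⟩
      rcases Nat.eq_zero_or_pos e with rfl | hepos
      · rw [show (0 + mμ - 1) / mμ = 0 from Nat.div_eq_of_lt (by omega)]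
        simp
      · have hc : (e + mμ - 1) / mμ ≤ 1 := by
          rw [Nat.div_le_iff_le_mul_add_pred hmμ]; omega
        have hw1 : gR i ∈ J ^ 1 := by rw [pow_one]; exact hJA e _ hmem (by omega)
        exact Ideal.pow_le_pow_right hc hw1
    | one =>
      refine ⟨0, SetLike.GradedOne.one_mem, ?_⟩
      rw [show (0 + mμ - 1) / mμ = 0 from Nat.div_eq_of_lt (by omega)]
      simp
    | mul x y hx hy ihx ihy =>
      obtain ⟨e₁, hm₁, hp₁⟩ := ihx
      obtain ⟨e₂, hm₂, hp₂⟩ := ihy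
      refine ⟨e₁ + e₂, SetLike.mul_mem_graded hm₁ hm₂, ?_⟩
      have hmem : x * y ∈ J ^ ((e₁ + mμ - 1) / mμ + (e₂ + mμ - 1) / mμ) := by
        rw [pow_add]; exact Ideal.mul_mem_mul hp₁ hp₂
      refine Ideal.pow_le_pow_right ?_ hmem
      rw [Nat.div_le_iff_le_mul_add_pred hmμ, Nat.mul_add]
      have h₁ := Nat.div_add_mod (e₁ + mμ - 1) mμ
      have h₂ := Nat.div_add_mod (e₂ + mμ - 1) mμ
      have hm₁' := Nat.mod_lt (e₁ + mμ - 1) hmμ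
      have hm₂' := Nat.mod_lt (e₂ + mμ - 1) hmμ
      set X := mμ * ((e₁ + mμ - 1) / mμ)
      set Y := mμ * ((e₂ + mμ - 1) / mμ)
      set Z₁ := (e₁ + mμ - 1) % mμ
      set Z₂ := (e₂ + mμ - 1) % mμ
      omega
  -- graded pieces lie in powers of J
  have hAJ : 0 < mμ → ∀ (c j : ℕ), mμ * c ≤ j → ∀ x ∈ 𝒜 j, x ∈ J ^ c := by
    intro hmμ c j hcj x hx
    have key : ∀ z : R, z ∈ Submodule.span k
        ((Submonoid.closure (Set.range gR) : Submonoid R) : Set R) →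
        (DirectSum.decompose 𝒜 z j : R) ∈ J ^ c := by
      intro z hz
      induction hz using Submodule.span_induction with
      | mem w hw =>
        obtain ⟨e, hme, hpe⟩ := hmono hmμ w hw
        by_cases hej : e = j
        · subst hej
          rw [DirectSum.decompose_of_mem_same 𝒜 hme]
          refine Ideal.pow_le_pow_right ?_ hpe
          calc c ≤ e / mμ := (Nat.le_div_iff_mul_le hmμ).mpr (by rw [Nat.mul_comm]; exact hcj)
            _ ≤ (e + mμ - 1) / mμ := Nat.div_le_div_right (by omega)
        · rw [DirectSum.decompose_of_mem_ne 𝒜 hme hej]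
          exact zero_mem _
      | zero => rw [DirectSum.decompose_zero]; simpa using zero_mem (J ^ c)
      | add a b _ _ iha ihb =>
        rw [DirectSum.decompose_add, DirectSum.add_apply]
        exact add_mem iha ihb
      | smul a z hz ihz =>
        rw [DirectSum.decompose_smul]
        have : ((a • DirectSum.decompose 𝒜 z) j : R) = a • (DirectSum.decompose 𝒜 z j : R) := by
          rw [DFinsupp.smul_apply]; rfl
        rw [this, Algebra.smul_def]
        exact Ideal.mul_mem_left _ _ ihz
    have key' := key x (hRspan x)
    rwa [DirectSum.decompose_of_mem_same 𝒜 hx] at key'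
  -- power of I inside the Frobenius power
  have hIpow : ∀ n : ℕ, 0 < s → I ^ (s * p ^ n) ≤ I.frobeniusPow (p ^ n) := by
    intro n hs
    obtain ⟨s', rfl⟩ : ∃ s', s = s' + 1 := ⟨s - 1, by omega⟩
    calc I ^ ((s' + 1) * p ^ n) = Ideal.span (Set.range gI) ^ ((s' + 1) * p ^ n) := by rw [hgI]
      _ ≤ Ideal.span ((· ^ p ^ n) '' Set.range gI) := pow_span_le_frob _ _ _
      _ ≤ I.frobeniusPow (p ^ n) := by
          apply Ideal.span_mono
          apply Set.image_mono
          rw [hgI]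
          exact Ideal.subset_span
  -- contradiction helper for degenerate cases
  have contra : (∀ x : R, x ∈ Submodule.span k ({1} : Set R)) → False := by
    intro hall
    have hfield : IsField R := by
      refine ⟨exists_pair_ne R, mul_comm, ?_⟩
      intro a ha
      obtain ⟨c, hc⟩ := Submodule.mem_span_singleton.mp (hall a)
      have hc0 : c ≠ 0 := by rintro rfl; rw [zero_smul] at hc; exact ha hc.symm
      refine ⟨c⁻¹ • 1, ?_⟩
      rw [← hc, ← Algebra.algebraMap_eq_smul_one, ← Algebra.algebraMap_eq_smul_one, ← map_mul,
        mul_inv_cancel₀ hc0, map_one]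
    have h0 := ringKrullDim_eq_zero_of_isField hfield
    rw [hdim] at h0
    have hd0 : d = 0 := by exact_mod_cast h0
    omega
  -- the main degree-vanishing statement
  have part3 : ∀ n m : ℕ, nν + mμ * l * s * p ^ n ≤ m →
      ℳ m ≤ ((I.frobeniusPow (p ^ n)) • (⊤ : Submodule R M)).restrictScalars k := by
    intro n m hm
    by_cases hl0 : l = 0
    · have hItop : I = ⊤ := by
        have h0 : J ^ l = ⊤ := by rw [hl0, pow_zero, Ideal.one_eq_top]
        exact top_le_iff.mp (h0 ▸ hl)
      have hfr : I.frobeniusPow (p ^ n) = ⊤ := by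
        rw [Ideal.eq_top_iff_one]
        apply Ideal.subset_span
        exact ⟨1, by rw [hItop]; exact Submodule.mem_top, one_pow _⟩
      rw [hfr, Submodule.top_smul]
      intro x _
      trivial
    · by_cases hs0 : s = 0
      · exfalso
        apply contra
        intro x
        have hIbot : I = ⊥ := by
          rw [hgI]
          subst hs0
          rw [Set.range_eq_empty gI, Ideal.span_empty]
        have hJbot : J = ⊥ := by
          rw [eq_bot_iff]
          intro y hy
          have h1 : y ^ l ∈ J ^ l := Ideal.pow_mem_pow hy l
          have h2 : y ^ l = 0 := by
            have := hl h1
            rwa [hIbot, Ideal.mem_bot] at this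
          rw [Ideal.mem_bot]
          exact pow_eq_zero_iff hl0 |>.mp h2
        rw [← DirectSum.sum_support_decompose 𝒜 x]
        apply Submodule.sum_mem
        intro i _
        by_cases hi : i = 0
        · subst hi; exact h𝒜0 (SetLike.coe_mem _)
        · have hmem : (DirectSum.decompose 𝒜 x i : R) ∈ J :=
            hJA i _ (SetLike.coe_mem _) hi
          rw [hJbot, Ideal.mem_bot] at hmem
          rw [hmem]
          exact zero_mem _
      · by_cases hmμ0 : mμ = 0
        · exfalso
          apply contra
          intro x
          have hbotle : ∀ y : R, y ∈ (⊥ : Subalgebra k R) → y ∈ Submodule.span k ({1} : Set R) := by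
            intro y hy
            rw [Algebra.mem_bot] at hy
            obtain ⟨c, rfl⟩ := hy
            rw [Algebra.algebraMap_eq_smul_one]
            exact Submodule.smul_mem _ _ (Submodule.mem_span_singleton_self 1)
          apply hbotle
          have hle : Algebra.adjoin k (Set.range gR) ≤ ⊥ := by
            apply Algebra.adjoin_le
            rintro y ⟨i, rfl⟩
            obtain ⟨e, he, hmem⟩ := hgRhom i
            have he0 : e = 0 := by omega
            subst he0
            have h1 := h𝒜0 hmem
            rw [Submodule.mem_span_singleton] at h1
            obtain ⟨c, hc⟩ := h1
            show gR i ∈ (⊥ : Subalgebra k R)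
            rw [Algebra.mem_bot]
            exact ⟨c, by rw [Algebra.algebraMap_eq_smul_one, hc]⟩
          rw [hgR] at hle
          exact hle Algebra.mem_top
        · -- generic case
          have hmμ : 0 < mμ := Nat.pos_of_ne_zero hmμ0
          have hspos : 0 < s := Nat.pos_of_ne_zero hs0
          -- homogeneous of high degree lies in the Frobenius power
          have hdeg : ∀ (e : ℕ), mμ * l * s * p ^ n ≤ e → ∀ w ∈ 𝒜 e,
              w ∈ I.frobeniusPow (p ^ n) := by
            intro e he w hw
            have hassoc : mμ * l * s * p ^ n = mμ * (l * (s * p ^ n)) := by ring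
            have h1 : w ∈ J ^ (l * (s * p ^ n)) :=
              hAJ hmμ (l * (s * p ^ n)) e (by omega) w hw
            have h2 : J ^ (l * (s * p ^ n)) = (J ^ l) ^ (s * p ^ n) := pow_mul _ _ _
            have h3 : (J ^ l) ^ (s * p ^ n) ≤ I ^ (s * p ^ n) := Ideal.pow_right_mono hl _
            exact hIpow n hspos (h3 (h2 ▸ h1))
          -- M is spanned over k by monomial multiples of the module generators
          set X : Set M :=
            {z : M | ∃ w ∈ Submonoid.closure (Set.range gR), ∃ i, z = w • gM i} with hX
          have hMspan : ∀ x : M, x ∈ Submodule.span k X := by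
            intro x
            have hsmul : ∀ r : R, ∀ y ∈ Submodule.span k X, r • y ∈ Submodule.span k X := by
              intro r
              have hr := hRspan r
              induction hr using Submodule.span_induction with
              | mem w hw =>
                intro y hy
                induction hy using Submodule.span_induction with
                | mem z hz =>
                  obtain ⟨w', hw', i, rfl⟩ := hz
                  apply Submodule.subset_span
                  exact ⟨w * w', mul_mem hw hw', i, smul_smul w w' (gM i)⟩
                | zero => rw [smul_zero]; exact zero_mem _
                | add a b _ _ iha ihb => rw [smul_add]; exact add_mem iha ihb
                | smul c z hz ihz =>
                  have hcomm : w • (c • z) = c • (w • z) := by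
                    calc w • c • z = w • ((c • (1:R)) • z) := by rw [smul_assoc, one_smul]
                      _ = (w * (c • (1:R))) • z := (mul_smul _ _ _).symm
                      _ = ((c • (1:R)) * w) • z := by rw [mul_comm]
                      _ = (c • (1:R)) • (w • z) := mul_smul _ _ _
                      _ = c • (w • z) := by rw [smul_assoc, one_smul]
                  rw [hcomm]
                  exact Submodule.smul_mem _ _ ihz
              | zero => intro y hy; rw [zero_smul]; exact zero_mem _
              | add a b _ _ iha ihb =>
                intro y hy; rw [add_smul]; exact add_mem (iha y hy) (ihb y hy)
              | smul c r hr ihr =>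
                intro y hy; rw [smul_assoc]; exact Submodule.smul_mem _ _ (ihr y hy)
            have hx' : x ∈ Submodule.span R (Set.range gM) := by rw [hgM]; trivial
            induction hx' using Submodule.span_induction with
            | mem z hz =>
              obtain ⟨i, rfl⟩ := hz
              exact Submodule.subset_span ⟨1, one_mem _, i, (one_smul R (gM i)).symm⟩
            | zero => exact zero_mem _
            | add a b _ _ iha ihb => exact add_mem iha ihb
            | smul r z hz ihz => exact hsmul r z ihz
          intro x hx
          have key : ∀ z : M, z ∈ Submodule.span k X → (DirectSum.decompose ℳ z m : M) ∈
              ((I.frobeniusPow (p ^ n)) • (⊤ : Submodule R M)).restrictScalars k := by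
            intro z hzs
            induction hzs using Submodule.span_induction with
            | mem z hz =>
              obtain ⟨w, hw, i, rfl⟩ := hz
              obtain ⟨e, hme, -⟩ := hmono hmμ w hw
              obtain ⟨e', he', hme'⟩ := hgMhom i
              have hzmem : w • gM i ∈ ℳ (e + e') := SetLike.GradedSMul.smul_mem hme hme'
              by_cases hdeg' : e + e' = m
              · subst hdeg'
                rw [DirectSum.decompose_of_mem_same ℳ hzmem]
                have hwI : w ∈ I.frobeniusPow (p ^ n) := hdeg e (by omega) w hme
                exact (Submodule.restrictScalars_mem k _ _).mpr
                  (Submodule.smul_mem_smul hwI Submodule.mem_top)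
              · rw [DirectSum.decompose_of_mem_ne ℳ hzmem hdeg']
                exact zero_mem _
            | zero => rw [DirectSum.decompose_zero]; simpa using zero_mem _
            | add a b _ _ iha ihb =>
              rw [DirectSum.decompose_add, DirectSum.add_apply]
              exact add_mem iha ihb
            | smul c z hz ihz =>
              rw [DirectSum.decompose_smul]
              have hcoe : ((c • DirectSum.decompose ℳ z) m : M)
                  = c • (DirectSum.decompose ℳ z m : M) := by
                rw [DFinsupp.smul_apply]; rfl
              rw [hcoe]
              exact Submodule.smul_mem _ _ ihz
          have key' := key x (hMspan x)
          rwa [DirectSum.decompose_of_mem_same ℳ hx] at key'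
  -- part 1 : continuity
  have hppos : 0 < p := (Fact.out : p.Prime).pos
  have part1 : ∀ n, ContinuousOn (hkStepG k ℳ I d n₀ p n) (Set.Ici 0) := by
    intro n
    have hq : ((p ^ n : ℕ) : ℝ) ≠ 0 :=
      Nat.cast_ne_zero.mpr (pow_ne_zero n hppos.ne')
    set G : ℕ → ℝ := fun a => (∑ i ∈ Finset.range n₀,
        (gradedPieceLen k ℳ ((I.frobeniusPow (p ^ n) • (⊤ : Submodule R M)).restrictScalars k)
          (a * n₀ + i) : ℝ)) / ((p : ℝ) ^ n) ^ (d - 1) with hG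
    have hstep : ∀ y : ℝ, hkStep k ℳ I d n₀ p n y = G ⌊y * ((p ^ n : ℕ) : ℝ)⌋₊ := fun y => rfl
    have hkey : ∀ x : ℝ, hkStepG k ℳ I d n₀ p n x =
        (fun y : ℝ => (1 - (y - ⌊y⌋₊)) * G ⌊y⌋₊ + (y - ⌊y⌋₊) * G (⌊y⌋₊ + 1))
          (x * ((p ^ n : ℕ) : ℝ)) := by
      intro x
      show (1 - (x * ((p ^ n : ℕ) : ℝ) - ⌊x * ((p ^ n : ℕ) : ℝ)⌋₊)) *
            hkStep k ℳ I d n₀ p n ((⌊x * ((p ^ n : ℕ) : ℝ)⌋₊ : ℝ) / ((p ^ n : ℕ) : ℝ))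
          + (x * ((p ^ n : ℕ) : ℝ) - ⌊x * ((p ^ n : ℕ) : ℝ)⌋₊) *
            hkStep k ℳ I d n₀ p n ((⌊x * ((p ^ n : ℕ) : ℝ)⌋₊ + 1 : ℝ) / ((p ^ n : ℕ) : ℝ)) = _
      rw [hstep, hstep, div_mul_cancel₀ _ hq, div_mul_cancel₀ _ hq, Nat.floor_natCast,
        show ((⌊x * ((p ^ n : ℕ) : ℝ)⌋₊ : ℝ) + 1) = ((⌊x * ((p ^ n : ℕ) : ℝ)⌋₊ + 1 : ℕ) : ℝ) by
          push_cast; ring,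
        Nat.floor_natCast]
    have : hkStepG k ℳ I d n₀ p n = fun x =>
        (fun y : ℝ => (1 - (y - ⌊y⌋₊)) * G ⌊y⌋₊ + (y - ⌊y⌋₊) * G (⌊y⌋₊ + 1))
          (x * ((p ^ n : ℕ) : ℝ)) := funext hkey
    rw [this]
    exact ((interp_continuous G).comp (continuous_mul_right _)).continuousOn
  refine ⟨part1, ?_, part3⟩
  -- part 2 : support bound
  refine ⟨((nν + mμ * l * s + 1 : ℕ) : ℝ), by positivity, ?_⟩
  intro n hn x hx
  have hqpos : (0 : ℝ) < ((p ^ n : ℕ) : ℝ) := by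
    exact_mod_cast pow_pos hppos n
  have hq : ((p ^ n : ℕ) : ℝ) ≠ 0 := ne_of_gt hqpos
  have hq1 : 1 ≤ p ^ n := Nat.one_le_pow n p hppos
  -- key vanishing of the step function
  have hzero : ∀ y : ℝ, ((nν + mμ * l * s * p ^ n : ℕ) : ℝ) ≤ y * ((p ^ n : ℕ) : ℝ) →
      hkStep k ℳ I d n₀ p n y = 0 := by
    intro y hy
    have hfl : nν + mμ * l * s * p ^ n ≤ ⌊y * ((p ^ n : ℕ) : ℝ)⌋₊ := Nat.le_floor hy
    show (∑ i ∈ Finset.range n₀,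
        (gradedPieceLen k ℳ ((I.frobeniusPow (p ^ n) • (⊤ : Submodule R M)).restrictScalars k)
          (⌊y * ((p ^ n : ℕ) : ℝ)⌋₊ * n₀ + i) : ℝ)) / ((p : ℝ) ^ n) ^ (d - 1) = 0
    have hsum : ∀ i ∈ Finset.range n₀,
        (gradedPieceLen k ℳ ((I.frobeniusPow (p ^ n) • (⊤ : Submodule R M)).restrictScalars k)
          (⌊y * ((p ^ n : ℕ) : ℝ)⌋₊ * n₀ + i) : ℝ) = 0 := by
      intro i _
      set j := ⌊y * ((p ^ n : ℕ) : ℝ)⌋₊ * n₀ + i with hj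
      have hjge : nν + mμ * l * s * p ^ n ≤ j := by
        have h1 : ⌊y * ((p ^ n : ℕ) : ℝ)⌋₊ ≤ ⌊y * ((p ^ n : ℕ) : ℝ)⌋₊ * n₀ :=
          Nat.le_mul_of_pos_right _ hn₀pos
        omega
      have hle := part3 n j hjge
      have htop : (((I.frobeniusPow (p ^ n) • (⊤ : Submodule R M)).restrictScalars k).comap
          (ℳ j).subtype) = ⊤ := by
        rw [eq_top_iff]
        intro v _
        exact hle v.2
      rw [gradedPieceLen, htop]
      haveI : Subsingleton ((ℳ j) ⧸ (⊤ : Submodule k (ℳ j))) :=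
        Submodule.Quotient.subsingleton_iff.mpr rfl
      rw [Module.finrank_zero_of_subsingleton]
      simp
    rw [Finset.sum_eq_zero hsum, zero_div]
  -- the cast bound
  have hNle : ((nν + mμ * l * s * p ^ n : ℕ) : ℝ) ≤
      ((nν + mμ * l * s + 1 : ℕ) : ℝ) * ((p ^ n : ℕ) : ℝ) := by
    have hnat : nν + mμ * l * s * p ^ n ≤ (nν + mμ * l * s + 1) * p ^ n := by
      have h1 : nν ≤ nν * p ^ n := Nat.le_mul_of_pos_right _ (pow_pos hppos n)
      calc nν + mμ * l * s * p ^ n ≤ nν * p ^ n + mμ * l * s * p ^ n + p ^ n := by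
            exact le_trans (Nat.add_le_add h1 le_rfl) (Nat.le_add_right _ _)
        _ = (nν + mμ * l * s + 1) * p ^ n := by ring
    calc ((nν + mμ * l * s * p ^ n : ℕ) : ℝ) ≤ (((nν + mμ * l * s + 1) * p ^ n : ℕ) : ℝ) := by
          exact_mod_cast hnat
      _ = ((nν + mμ * l * s + 1 : ℕ) : ℝ) * ((p ^ n : ℕ) : ℝ) := by push_cast; ring
  have hxq : ((nν + mμ * l * s * p ^ n : ℕ) : ℝ) ≤ x * ((p ^ n : ℕ) : ℝ) := by
    refine le_trans hNle ?_
    exact le_of_lt (mul_lt_mul_of_pos_right hx hqpos)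
  constructor
  · -- hkStepG vanishes
    have ha : nν + mμ * l * s * p ^ n ≤ ⌊x * ((p ^ n : ℕ) : ℝ)⌋₊ := Nat.le_floor hxq
    show (1 - (x * ((p ^ n : ℕ) : ℝ) - ⌊x * ((p ^ n : ℕ) : ℝ)⌋₊)) *
          hkStep k ℳ I d n₀ p n ((⌊x * ((p ^ n : ℕ) : ℝ)⌋₊ : ℝ) / ((p ^ n : ℕ) : ℝ))
        + (x * ((p ^ n : ℕ) : ℝ) - ⌊x * ((p ^ n : ℕ) : ℝ)⌋₊) *
          hkStep k ℳ I d n₀ p n ((⌊x * ((p ^ n : ℕ) : ℝ)⌋₊ + 1 : ℝ) / ((p ^ n : ℕ) : ℝ)) = 0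
    rw [hzero _ (by rw [div_mul_cancel₀ _ hq]; exact_mod_cast ha),
      hzero _ (by rw [div_mul_cancel₀ _ hq]
                  have : ((nν + mμ * l * s * p ^ n : ℕ) : ℝ) ≤ (⌊x * ((p ^ n : ℕ) : ℝ)⌋₊ : ℝ) := by
                    exact_mod_cast ha
                  linarith)]
    ring
  · exact hzero x hxq
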